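/- For an n×n positive semidefinite matrix L, a Hermitian matrix A, and real-valued functions f, g defined on the spectrum of A, we have Tr[f(A) L g(A) L] ≤ (1/2) Tr[(f(A)L)² + (g(A)L)²]. -/

import Mathlib

open Matrix ComplexOrder in
private lemma psd_trace_nonneg {n : ℕ} {M : Matrix (Fin n) (Fin n) ℂ}
    (hM : M.PosSemidef) : 0 ≤ Matrix.trace M := by
  rw [Matrix.trace]
  refine Finset.sum_nonneg fun i _ => ?_
  have := hM.diag_nonneg (i := i)
  simpa [dotProduct, Matrix.mulVec, Pi.single_apply, Finset.sum_ite_eq,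
    Matrix.diag] using this

open Matrix ComplexOrder in
theorem trace_fALgAL_le_half_trace_sq {n : ℕ} (L A : Matrix (Fin n) (Fin n) ℂ)
    (hL : L.PosSemidef) (hA : A.IsHermitian) (f g : ℝ → ℝ) :
    trace (hA.cfc f * L * hA.cfc g * L) ≤
      (1 / 2 : ℂ) * trace ((hA.cfc f * L) ^ 2 + (hA.cfc g * L) ^ 2) := by
  set F := hA.cfc f with hF
  set G := hA.cfc g with hG
  have hFh : F.IsHermitian := by
    have : IsSelfAdjoint (cfc f A) := cfc_predicate _ _
    rw [hA.cfc_eq] at this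
    exact this
  have hGh : G.IsHermitian := by
    have : IsSelfAdjoint (cfc g A) := cfc_predicate _ _
    rw [hA.cfc_eq] at this
    exact this
  set X := F - G with hX
  have hXh : X.IsHermitian := hFh.sub hGh
  open scoped MatrixOrder Matrix.Norms.L2Operator in
  set S := CFC.sqrt L with hS
  open scoped MatrixOrder Matrix.Norms.L2Operator in
  have hSh : S.IsHermitian := (CFC.sqrt_nonneg L).posSemidef.1
  open scoped MatrixOrder Matrix.Norms.L2Operator in
  have hSS : S * S = L := CFC.sqrt_mul_sqrt_self L hL.nonneg
  set M := S * X * S with hM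
  have hMh : M.IsHermitian := by
    rw [hM, Matrix.IsHermitian, Matrix.conjTranspose_mul, Matrix.conjTranspose_mul,
      hSh.eq, hXh.eq, mul_assoc]
  have key : 0 ≤ trace (X * L * X * L) := by
    have h1 : X * L * X * L = X * S * (S * X * S * S) := by
      rw [← hSS]; noncomm_ring
    have h2 : trace (X * S * (S * X * S * S)) = trace (M * Mᴴ) := by
      rw [hMh.eq, Matrix.trace_mul_comm, hM]; simp [mul_assoc]
    rw [h1, h2]
    exact psd_trace_nonneg (Matrix.posSemidef_self_mul_conjTranspose M)
  have expand : trace (X * L * X * L)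
      = trace ((F * L) ^ 2) + trace ((G * L) ^ 2) - 2 * trace (F * L * G * L) := by
    have hcomm : trace (G * L * F * L) = trace (F * L * G * L) := by
      rw [show G * L * F * L = (G * L) * (F * L) by noncomm_ring,
        Matrix.trace_mul_comm]; simp [mul_assoc]
    have : X * L * X * L = (F * L) ^ 2 + (G * L) ^ 2 - (F * L * G * L) - (G * L * F * L) := by
      rw [hX]; noncomm_ring
    rw [this, Matrix.trace_sub, Matrix.trace_sub, Matrix.trace_add, hcomm]
    ring
  rw [expand] at key
  have h2 : 2 * trace (F * L * G * L) ≤ trace ((F * L) ^ 2) + trace ((G * L) ^ 2) :=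
    sub_nonneg.mp key
  have hhalf : (0 : ℂ) ≤ 1 / 2 := by
    rw [Complex.le_def]; norm_num
  calc trace (F * L * G * L)
      = (1 / 2 : ℂ) * (2 * trace (F * L * G * L)) := by ring
    _ ≤ (1 / 2 : ℂ) * (trace ((F * L) ^ 2) + trace ((G * L) ^ 2)) :=
        mul_le_mul_of_nonneg_left h2 hhalf
    _ = (1 / 2 : ℂ) * trace ((F * L) ^ 2 + (G * L) ^ 2) := by rw [Matrix.trace_add]
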